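/- (Equivalence of NN-(M)DOOLSE and (RE)MLE.) In an orthogonal FDSLRM assume ε ∉ span{v₁,…,v_l} and n* > l (n* = n for MLE/DOOLSE, n* = n − k for REMLE/MDOOLSE). Let ν̂ be the unique minimizer over [0,∞)^{l+1} of the NN-(M)DOOLSE objective f₀(ν) = ν'Gν − 2q'ν (G and q as below); then ν̂₀ > 0. Define the bijective transformation d₀ = 1/ν₀, dⱼ = νⱼ/(ν₀(ν₀ + ‖vⱼ‖²νⱼ)) for j = 1,…,l. Then a vector ν ∈ [0,∞)^{l+1} with ν₀ > 0 minimizes f₀ over [0,∞)^{l+1} if and only if its image d = (d₀,…,d_l) minimizes the equivalent (RE)MLE convex objective g(d) = −(n* − l)·log d₀ − ∑_{j=1}^{l} log(d₀ − dⱼ‖vⱼ‖²) + d₀·ε'ε − ∑_{j=1}^{l} dⱼ·(ε'vⱼ)² over the set {d : dⱼ ≥ 0 for all j ≥ 1 and d₀ > dⱼ‖vⱼ‖² for all j}. In particular, non-negative (M)DOOLSE coincide with (RE)MLE in a Gaussian orthogonal FDSLRM whenever ε ∉ span{v₁,…,v_l} (an event of probability 1). -/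

import Mathlib

open Matrix

open Finset

section Stmt19Aux



/-- one-sided derivative test -/
lemma s19_onesided {C A ρ : ℝ} (hC : 0 ≤ C) (hρ : 0 < ρ)
    (h : ∀ t, 0 < t → t ≤ ρ → 0 ≤ C * t ^ 2 + 2 * t * A) : 0 ≤ A := by
  by_contra hA
  push_neg at hA
  have hC1 : (0:ℝ) < C + 1 := by linarith
  set t := min ρ (-A / (C + 1)) with ht
  have htpos : 0 < t := lt_min hρ (div_pos (by linarith) hC1)
  have h2 : C * t ≤ -A := by
    have h3 : t ≤ -A / (C + 1) := min_le_right _ _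
    have h4 : (C + 1) * t ≤ (C+1) * (-A / (C+1)) := by nlinarith
    have h5 : (C+1) * (-A / (C+1)) = -A := by field_simp
    nlinarith
  have h6 := h t htpos (min_le_left _ _)
  nlinarith

lemma s19_twosided {C A ρ : ℝ} (hC : 0 ≤ C) (hρ : 0 < ρ)
    (h : ∀ t, |t| ≤ ρ → 0 ≤ C * t ^ 2 + 2 * t * A) : A = 0 := by
  have h1 : 0 ≤ A := s19_onesided hC hρ (fun t ht hle => h t (by rw [abs_of_pos ht]; exact hle))
  have h2 : 0 ≤ -A := s19_onesided hC hρ (fun t ht hle => by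
    have := h (-t) (by rw [abs_neg, abs_of_pos ht]; exact hle)
    nlinarith)
  linarith

/-- the quadratic objective in split form -/
noncomputable def s19F {l : ℕ} (nstar s : ℝ) (c q1 : Fin l → ℝ) (a : ℝ) (b : Fin l → ℝ) : ℝ :=
  (nstar - l) * a^2 + ∑ j, (a + c j * b j)^2 - 2*s*a - 2*∑ j, q1 j * b j

lemma s19_quad_sub {l : ℕ} (nstar s : ℝ) (c q1 : Fin l → ℝ) (a a' : ℝ) (b b' : Fin l → ℝ) :
    s19F nstar s c q1 a' b' - s19F nstar s c q1 a b
    = (nstar - l)*(a'-a)^2 + (∑ j, ((a'-a) + c j*(b' j - b j))^2)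
      + 2*(a'-a)*(nstar*a + (∑ j, c j*b j) - s)
      + 2*∑ j, (b' j - b j)*(c j*(a + c j*b j) - q1 j) := by
  have key : (∑ j, (a' + c j * b' j)^2)
      = ∑ j, ((a + c j*b j)^2 + (((a'-a) + c j*(b' j - b j))^2
          + ((2*(a'-a)) * (a + c j * b j)
          + ((2:ℝ) * ((b' j - b j)*(c j*(a + c j*b j) - q1 j))
          + (2*(q1 j * b' j) - 2*(q1 j * b j)))))) :=
    Finset.sum_congr rfl (fun j _ => by ring)
  rw [Finset.sum_add_distrib, Finset.sum_add_distrib, Finset.sum_add_distrib,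
      Finset.sum_add_distrib, Finset.sum_sub_distrib, ← Finset.mul_sum, ← Finset.mul_sum,
      ← Finset.mul_sum, ← Finset.mul_sum, Finset.sum_add_distrib, Finset.sum_const,
      Finset.card_univ, Fintype.card_fin, nsmul_eq_mul] at key
  simp only [s19F]
  rw [key]
  ring










/-- necessity of KKT conditions for the quadratic problem -/
lemma s19_nec {l : ℕ} {nstar s : ℝ} {c q1 : Fin l → ℝ} {a : ℝ} {b : Fin l → ℝ}
    (hns : 0 ≤ nstar) (hc : ∀ j, 0 < c j) (ha : 0 ≤ a) (hb : ∀ j, 0 ≤ b j)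
    (hmin : ∀ a' b', 0 ≤ a' → (∀ j, 0 ≤ b' j) → s19F nstar s c q1 a b ≤ s19F nstar s c q1 a' b') :
    (0 ≤ nstar*a + (∑ j, c j*b j) - s ∧ (0 < a → nstar*a + (∑ j, c j*b j) - s = 0)) ∧
    ∀ j, 0 ≤ c j*(a + c j*b j) - q1 j ∧ (0 < b j → c j*(a + c j*b j) - q1 j = 0) := by
  have hdir0 : ∀ t : ℝ, 0 ≤ a + t →
      s19F nstar s c q1 (a+t) b - s19F nstar s c q1 a b
      = nstar * t^2 + 2*t*(nstar*a + (∑ j, c j*b j) - s) := by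
    intro t _
    rw [s19_quad_sub]
    simp only [sub_self, mul_zero, add_sub_cancel_left, add_zero, zero_mul, mul_zero,
      Finset.sum_const_zero]
    rw [Finset.sum_const, Finset.card_univ, Fintype.card_fin, nsmul_eq_mul]
    ring
  have hdirj : ∀ (j : Fin l) (t : ℝ),
      s19F nstar s c q1 a (Function.update b j (b j + t)) - s19F nstar s c q1 a b
      = (c j)^2 * t^2 + 2*t*(c j*(a + c j*b j) - q1 j) := by
    intro j t
    rw [s19_quad_sub]
    have e1 : ∀ i : Fin l, Function.update b j (b j + t) i - b i = if i = j then t else 0 := by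
      intro i
      by_cases h : i = j
      · subst h; simp
      · simp [Function.update_apply, h]
    have e2 : (∑ i, ((a-a) + c i*(Function.update b j (b j + t) i - b i))^2) = (c j * t)^2 := by
      rw [Fintype.sum_eq_single j]
      · simp [e1]
      · intro i hi; simp [e1, hi]
    have e3 : (∑ i, (Function.update b j (b j + t) i - b i)*(c i*(a + c i*b i) - q1 i))
        = t * (c j*(a + c j*b j) - q1 j) := by
      rw [Fintype.sum_eq_single j]
      · simp [e1]
      · intro i hi; simp [e1, hi]
    rw [e2, e3]
    ring
  constructor
  · have h1 : 0 ≤ nstar*a + (∑ j, c j*b j) - s := by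
      apply s19_onesided hns (zero_lt_one)
      intro t ht _
      have h2 := hmin (a+t) b (by linarith) hb
      have := hdir0 t (by linarith)
      linarith
    refine ⟨h1, fun hapos => ?_⟩
    apply s19_twosided hns hapos
    intro t ht
    rw [abs_le] at ht
    have h2 := hmin (a+t) b (by linarith) hb
    have := hdir0 t (by linarith)
    linarith
  · intro j
    have h1 : 0 ≤ c j*(a + c j*b j) - q1 j := by
      apply s19_onesided (sq_nonneg (c j)) (zero_lt_one)
      intro t ht _
      have hb' : ∀ i, 0 ≤ Function.update b j (b j + t) i := by
        intro i
        rcases eq_or_ne i j with h | h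
        · subst h; simp; have := hb i; linarith
        · simp [Function.update_apply, h]; exact hb i
      have h2 := hmin a (Function.update b j (b j + t)) ha hb'
      have := hdirj j t
      linarith
    refine ⟨h1, fun hbpos => ?_⟩
    apply s19_twosided (sq_nonneg (c j)) hbpos
    intro t ht
    rw [abs_le] at ht
    have hb' : ∀ i, 0 ≤ Function.update b j (b j + t) i := by
      intro i
      rcases eq_or_ne i j with h | h
      · subst h; simp; linarith
      · simp [Function.update_apply, h]; exact hb i
    have h2 := hmin a (Function.update b j (b j + t)) ha hb'
    have := hdirj j t
    linarith

/-- sufficiency of KKT conditions for the quadratic problem -/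
lemma s19_suf {l : ℕ} {nstar s : ℝ} {c q1 : Fin l → ℝ} {a : ℝ} {b : Fin l → ℝ}
    (hns : (l:ℝ) ≤ nstar) (hb : ∀ j, 0 ≤ b j)
    (h0 : nstar*a + (∑ j, c j*b j) - s = 0)
    (hj : ∀ j, 0 ≤ c j*(a + c j*b j) - q1 j ∧ (0 < b j → c j*(a + c j*b j) - q1 j = 0)) :
    ∀ a' b', 0 ≤ a' → (∀ j, 0 ≤ b' j) → s19F nstar s c q1 a b ≤ s19F nstar s c q1 a' b' := by
  intro a' b' _ hb'
  have key := s19_quad_sub nstar s c q1 a a' b b'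
  have h1 : 0 ≤ (∑ j, ((a'-a) + c j*(b' j - b j))^2) :=
    Finset.sum_nonneg (fun j _ => sq_nonneg _)
  have h2 : 0 ≤ ∑ j, (b' j - b j)*(c j*(a + c j*b j) - q1 j) := by
    apply Finset.sum_nonneg
    intro j _
    rcases lt_or_eq_of_le (hb j) with h | h
    · rw [(hj j).2 h]; ring_nf; exact le_refl _
    · have hbj : b j = 0 := h.symm
      exact mul_nonneg (by rw [hbj]; simpa using hb' j) (hj j).1
  rw [h0, mul_zero, add_zero] at key
  have h3 : 0 ≤ (nstar - (l:ℝ)) * (a' - a)^2 :=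
    mul_nonneg (by linarith) (sq_nonneg _)
  linarith


noncomputable def s19G {l : ℕ} (nstar s : ℝ) (c q1 : Fin l → ℝ) (a : ℝ) (b : Fin l → ℝ) : ℝ :=
  -(nstar - (l:ℝ)) * Real.log a - ∑ j, Real.log (a - b j * c j) + a * s - ∑ j, b j * q1 j

lemma s19_log_le {x y : ℝ} (hx : 0 < x) (hy : 0 < y) :
    Real.log y - Real.log x ≤ (y - x) / x := by
  have h := Real.log_le_sub_one_of_pos (show 0 < y / x from div_pos hy hx)
  rw [Real.log_div (ne_of_gt hy) (ne_of_gt hx)] at h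
  have : y / x - 1 = (y - x) / x := by field_simp
  linarith [this ▸ h]

lemma s19_logmid {x y : ℝ} (hx : 0 < x) (hy : 0 < y) :
    (Real.log x + Real.log y) / 2 ≤ Real.log ((x + y) / 2) ∧
    (x ≠ y → (Real.log x + Real.log y) / 2 < Real.log ((x + y) / 2)) := by
  have hstrict : x ≠ y → (Real.log x + Real.log y) / 2 < Real.log ((x + y) / 2) := by
    intro hne
    have h := strictConcaveOn_log_Ioi.2 (Set.mem_Ioi.2 hx) (Set.mem_Ioi.2 hy) hne
      (by norm_num : (0:ℝ) < 1/2) (by norm_num : (0:ℝ) < 1/2) (by norm_num)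
    simp only [smul_eq_mul] at h
    calc (Real.log x + Real.log y) / 2 = 1/2 * Real.log x + 1/2 * Real.log y := by ring
    _ < Real.log (1/2 * x + 1/2 * y) := h
    _ = Real.log ((x + y)/2) := by ring_nf
  refine ⟨?_, hstrict⟩
  rcases eq_or_ne x y with h | h
  · subst h
    have : (x + x) / 2 = x := by ring
    rw [this]; linarith
  · linarith [hstrict h]

/-- sufficiency of KKT for the log objective -/
lemma s19G_suf {l : ℕ} {nstar s : ℝ} {c q1 : Fin l → ℝ} {a : ℝ} {b : Fin l → ℝ}
    (hns : (l:ℝ) ≤ nstar) (ha : 0 < a) (hD : ∀ j, b j * c j < a)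
    (h0 : (nstar - l)/a + (∑ j, 1/(a - b j * c j)) = s)
    (hj : ∀ j, 0 ≤ c j * (1/(a - b j * c j)) - q1 j ∧
          (0 < b j → c j * (1/(a - b j * c j)) - q1 j = 0))
    (hb : ∀ j, 0 ≤ b j) :
    ∀ a' b', (∀ j, 0 ≤ b' j) → (∀ j, b' j * c j < a') → 0 < a' →
      s19G nstar s c q1 a b ≤ s19G nstar s c q1 a' b' := by
  intro a' b' hb' hD' ha'
  have hpos : ∀ j, 0 < a - b j * c j := fun j => by linarith [hD j]
  have hpos' : ∀ j, 0 < a' - b' j * c j := fun j => by linarith [hD' j]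
  -- per-term inequality
  have hterm : ∀ j, 0 ≤ (-(Real.log (a' - b' j * c j)) - b' j * q1 j)
      - (-(Real.log (a - b j * c j)) - b j * q1 j) + (a' - a) * (1/(a - b j * c j)) := by
    intro j
    have hlog := s19_log_le (hpos j) (hpos' j)
    have hr : (0:ℝ) < 1/(a - b j * c j) := one_div_pos.2 (hpos j)
    have hslack : 0 ≤ (b' j - b j) * (c j * (1/(a - b j * c j)) - q1 j) := by
      rcases lt_or_eq_of_le (hb j) with h | h
      · rw [(hj j).2 h]; ring_nf; exact le_refl _
      · exact mul_nonneg (by rw [← h]; simpa using hb' j) (hj j).1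
    have hdivrw : ((a' - b' j * c j) - (a - b j * c j)) / (a - b j * c j)
        = ((a' - a) - (b' j - b j) * c j) * (1/(a - b j * c j)) := by
      field_simp
      ring
    rw [hdivrw] at hlog
    nlinarith [hlog, hslack]
  -- the a-part inequality
  have haineq : (a' - a) * (∑ j, 1/(a - b j * c j)) ≤ (-(nstar - (l:ℝ)) * Real.log a' + a' * s)
      - (-(nstar - (l:ℝ)) * Real.log a + a * s) := by
    have hlog := s19_log_le ha ha'
    have h1 : (nstar - (l:ℝ)) * (Real.log a' - Real.log a) ≤ (nstar - l) * ((a' - a)/a) := by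
      apply mul_le_mul_of_nonneg_left hlog (by linarith)
    have h4 : (a' - a) * (∑ j, 1/(a - b j * c j))
        = (a' - a) * s - (nstar - (l:ℝ)) * ((a' - a)/a) := by
      rw [show (∑ j, 1/(a - b j * c j)) = s - (nstar - l)/a by linarith [h0]]
      ring
    rw [h4]
    nlinarith [h1]
  have hsum : 0 ≤ ∑ j, ((-(Real.log (a' - b' j * c j)) - b' j * q1 j)
      - (-(Real.log (a - b j * c j)) - b j * q1 j) + (a' - a) * (1/(a - b j * c j))) :=
    Finset.sum_nonneg (fun j _ => hterm j)
  rw [Finset.sum_add_distrib, Finset.sum_sub_distrib, Finset.sum_sub_distrib,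
      Finset.sum_sub_distrib, ← Finset.mul_sum] at hsum
  simp only [Finset.sum_neg_distrib] at hsum
  simp only [s19G]
  linarith [hsum, haineq]






/-- uniqueness of the minimizer of the log objective -/
lemma s19G_uniq {l : ℕ} {nstar s : ℝ} {c q1 : Fin l → ℝ}
    (hns : (l:ℝ) < nstar) (hc : ∀ j, 0 < c j)
    {a a' : ℝ} {b b' : Fin l → ℝ} (ha : 0 < a) (ha' : 0 < a')
    (hb : ∀ j, 0 ≤ b j) (hDa : ∀ j, b j * c j < a)
    (hb' : ∀ j, 0 ≤ b' j) (hDa' : ∀ j, b' j * c j < a')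
    (hmin : ∀ x y, 0 < x → (∀ j, 0 ≤ y j) → (∀ j, y j * c j < x) →
      s19G nstar s c q1 a b ≤ s19G nstar s c q1 x y)
    (hGe : s19G nstar s c q1 a b = s19G nstar s c q1 a' b') :
    a = a' ∧ b = b' := by
  set m : ℝ := (a + a')/2 with hm
  set mb : Fin l → ℝ := fun j => (b j + b' j)/2 with hmb
  have hmpos : 0 < m := by simp only [hm]; linarith
  have hmbnn : ∀ j, 0 ≤ mb j := fun j => by simp only [hmb]; have := hb j; have := hb' j; positivity
  have hmbD : ∀ j, mb j * c j < m := by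
    intro j
    have h1 := hDa j
    have h2 := hDa' j
    simp only [hmb, hm]
    nlinarith
  have hposx : ∀ j, 0 < a - b j * c j := fun j => by linarith [hDa j]
  have hposy : ∀ j, 0 < a' - b' j * c j := fun j => by linarith [hDa' j]
  have hmidarg : ∀ j, m - mb j * c j = ((a - b j * c j) + (a' - b' j * c j))/2 := by
    intro j; simp only [hm, hmb]; ring
  have hterm_le : ∀ j, (Real.log (a - b j * c j) + Real.log (a' - b' j * c j))/2
      ≤ Real.log (m - mb j * c j) := by
    intro j; rw [hmidarg j]; exact (s19_logmid (hposx j) (hposy j)).1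
  have e1 : ∑ j, mb j * q1 j = ((∑ j, b j * q1 j) + ∑ j, b' j * q1 j)/2 := by
    have h : ∀ j ∈ univ, mb j * q1 j = b j * q1 j / 2 + b' j * q1 j / 2 :=
      fun j _ => by simp only [hmb]; ring
    rw [Finset.sum_congr rfl h, Finset.sum_add_distrib, ← Finset.sum_div, ← Finset.sum_div]
    ring
  have e2 : ((∑ j, Real.log (a - b j * c j)) + ∑ j, Real.log (a' - b' j * c j))/2
      = ∑ j, (Real.log (a - b j * c j) + Real.log (a' - b' j * c j))/2 := by
    rw [← Finset.sum_add_distrib, Finset.sum_div]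
  have hmge := hmin m mb hmpos hmbnn hmbD
  -- we show a = a' first
  have hlogmid := s19_logmid ha ha'
  have haa : a = a' := by
    by_contra hne
    have strict1 : (Real.log a + Real.log a')/2 < Real.log m := hlogmid.2 hne
    have B1 : -(nstar - (l:ℝ)) * Real.log m < -(nstar - (l:ℝ)) * ((Real.log a + Real.log a')/2) := by
      have h := mul_lt_mul_of_pos_left strict1 (show (0:ℝ) < nstar - l by linarith)
      nlinarith
    have B2 : ∑ j, (Real.log (a - b j * c j) + Real.log (a' - b' j * c j))/2
        ≤ ∑ j, Real.log (m - mb j * c j) := Finset.sum_le_sum (fun j _ => hterm_le j)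
    rw [← e2] at B2
    have : s19G nstar s c q1 m mb < s19G nstar s c q1 a b := by
      simp only [s19G]
      rw [e1]
      have hms : m * s = ((a*s) + (a'*s))/2 := by simp only [hm]; ring
      rw [hms]
      simp only [s19G] at hGe
      linarith [hGe, B1, B2]
    linarith [hmge]
  subst haa
  refine ⟨rfl, ?_⟩
  funext j0
  by_contra hne
  have hargne : a - b j0 * c j0 ≠ a - b' j0 * c j0 := by
    intro h
    apply hne
    have : b j0 * c j0 = b' j0 * c j0 := by linarith
    exact mul_right_cancel₀ (ne_of_gt (hc j0)) this
  have strict2 : (Real.log (a - b j0 * c j0) + Real.log (a - b' j0 * c j0))/2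
      < Real.log (m - mb j0 * c j0) := by
    rw [hmidarg j0]; exact (s19_logmid (hposx j0) (hposy j0)).2 hargne
  have B2 : ∑ j, (Real.log (a - b j * c j) + Real.log (a - b' j * c j))/2
      < ∑ j, Real.log (m - mb j * c j) :=
    Finset.sum_lt_sum (fun j _ => hterm_le j) ⟨j0, Finset.mem_univ j0, strict2⟩
  rw [← e2] at B2
  have B1 : -(nstar - (l:ℝ)) * Real.log m ≤ -(nstar - (l:ℝ)) * ((Real.log a + Real.log a)/2) := by
    have h := mul_le_mul_of_nonneg_left hlogmid.1 (show (0:ℝ) ≤ nstar - l by linarith)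
    nlinarith
  have : s19G nstar s c q1 m mb < s19G nstar s c q1 a b := by
    simp only [s19G]
    rw [e1]
    have hms : m * s = ((a*s) + (a*s))/2 := by simp only [hm]; ring
    rw [hms]
    simp only [s19G] at hGe
    linarith [hGe, B1, B2]
  linarith [hmge]


lemma s19_bessel {n l : ℕ} {ε : Fin n → ℝ} {V : Fin n → Fin l → ℝ} {c : Fin l → ℝ}
    (hc : ∀ j, c j = ∑ i, V i j ^ 2) (hcpos : ∀ j, 0 < c j)
    (horth : ∀ j j' : Fin l, j ≠ j' → (∑ i, V i j * V i j') = 0)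
    (hspan : ε ∉ Submodule.span ℝ (Set.range fun j : Fin l => fun i => V i j)) :
    ∑ j, (∑ i, ε i * V i j)^2 / c j < ∑ i, ε i ^ 2 := by
  set p : Fin l → ℝ := fun j => ∑ i, ε i * V i j with hp
  set A : Fin l → ℝ := fun j => p j / c j with hA
  set u : Fin n → ℝ := fun i => ∑ j, A j * V i j with hu
  set w : Fin n → ℝ := fun i => ε i - u i with hw
  have hwne : w ≠ 0 := by
    intro h
    apply hspan
    have hεu : ε = u := by
      funext i
      have := congrFun h i
      simp only [hw, Pi.zero_apply] at this
      linarith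
    rw [hεu]
    have : u = ∑ j, A j • (fun i => V i j) := by
      funext i
      simp [hu, Finset.sum_apply]
    rw [this]
    exact Submodule.sum_mem _ (fun j _ =>
      Submodule.smul_mem _ _ (Submodule.subset_span ⟨j, rfl⟩))
  have h1 : ∑ i, ε i * u i = ∑ j, A j * p j := by
    simp only [hu, Finset.mul_sum]
    rw [Finset.sum_comm]
    apply Finset.sum_congr rfl
    intro j _
    simp only [hp, Finset.mul_sum]
    apply Finset.sum_congr rfl
    intro i _
    ring
  have h2 : ∑ i, u i ^ 2 = ∑ j, A j * A j * c j := by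
    have e1 : ∀ i, u i ^ 2 = ∑ j, ∑ j', (A j * V i j) * (A j' * V i j') := by
      intro i
      rw [sq, hu]
      simp only []
      rw [Finset.sum_mul_sum]
    rw [Finset.sum_congr rfl (fun i _ => e1 i), Finset.sum_comm]
    apply Finset.sum_congr rfl
    intro j _
    rw [Finset.sum_comm]
    have e2 : ∀ j', (∑ i, (A j * V i j) * (A j' * V i j')) = A j * A j' * ∑ i, V i j * V i j' := by
      intro j'
      rw [Finset.mul_sum]
      apply Finset.sum_congr rfl
      intro i _
      ring
    rw [Finset.sum_congr rfl (fun j' _ => e2 j')]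
    rw [Fintype.sum_eq_single j]
    · congr 1
      rw [hc j]
      apply Finset.sum_congr rfl
      intro i _
      ring
    · intro j' hj'
      rw [horth j j' (Ne.symm hj')]
      ring
  have h3 : ∑ i, w i ^ 2 = ∑ i, ε i ^ 2 - 2 * ∑ i, ε i * u i + ∑ i, u i ^ 2 := by
    have : ∀ i, w i ^ 2 = ε i ^ 2 - 2 * (ε i * u i) + u i ^ 2 := fun i => by
      simp only [hw]; ring
    rw [Finset.sum_congr rfl (fun i _ => this i), Finset.sum_add_distrib,
        Finset.sum_sub_distrib, ← Finset.mul_sum]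
  have h4 : ∑ i, w i ^ 2 = ∑ i, ε i ^ 2 - ∑ j, p j ^ 2 / c j := by
    rw [h3, h1, h2]
    have : ∀ j, 2 * (A j * p j) - A j * A j * c j = p j ^ 2 / c j := by
      intro j
      have hcne : c j ≠ 0 := ne_of_gt (hcpos j)
      simp only [hA]
      field_simp
      ring
    have hcomb : 2 * ∑ j, A j * p j - ∑ j, A j * A j * c j = ∑ j, p j ^ 2 / c j := by
      rw [Finset.mul_sum, ← Finset.sum_sub_distrib]
      exact Finset.sum_congr rfl (fun j _ => this j)
    linarith [hcomb]
  have h5 : 0 < ∑ i, w i ^ 2 := by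
    obtain ⟨i0, hi0⟩ := Function.ne_iff.1 hwne
    apply Finset.sum_pos' (fun i _ => sq_nonneg _)
    exact ⟨i0, Finset.mem_univ i0, pow_two_pos_of_ne_zero hi0⟩
  have : ∑ j, p j ^ 2 / c j < ∑ i, ε i ^ 2 := by linarith
  simpa [hp] using this

end Stmt19Aux

/-- Equivalence of NN-(M)DOOLSE and (RE)MLE in an orthogonal FDSLRM with
`ε ∉ span{v₁,…,v_l}` and `n* > l`: the unique nonnegative minimizer `ν̂` of
the NN-(M)DOOLSE objective `f₀(ν) = ν'Gν − 2q'ν` has `ν̂₀ > 0`, and a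
nonnegative `ν` with `ν₀ > 0` minimizes `f₀` over the orthant iff its image
under the bijective transformation `d₀ = 1/ν₀`,
`dⱼ = νⱼ/(ν₀(ν₀ + ‖vⱼ‖²νⱼ))` minimizes the equivalent (RE)MLE convex
objective `g(d) = −(n*−l)log d₀ − ∑ⱼ log(d₀ − dⱼ‖vⱼ‖²) + d₀ε'ε − ∑ⱼ dⱼ(ε'vⱼ)²`
over `{d : dⱼ ≥ 0, d₀ > dⱼ‖vⱼ‖²}`. -/
theorem stmt_19 {n k l : ℕ} (hn : 0 < n) (hk : 0 < k) (hl : 0 < l)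
    (hnkl : k + l < n)
    (F : Matrix (Fin n) (Fin k) ℝ) (hF : F.rank = k)
    (V : Matrix (Fin n) (Fin l) ℝ)
    (hcols : ∀ j : Fin l, (fun i => V i j) ≠ 0)
    (nv : Fin l → ℝ) (hnv : ∀ j, nv j = ∑ i, V i j ^ 2)
    (hFV : Fᵀ * V = 0) (hVV : Vᵀ * V = Matrix.diagonal nv)
    (Mf : Matrix (Fin n) (Fin n) ℝ) (hMf : Mf = 1 - F * (Fᵀ * F)⁻¹ * Fᵀ)
    (x : Fin n → ℝ) (ε : Fin n → ℝ) (hε : ε = Mf.mulVec x)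
    (hεspan : ε ∉ Submodule.span ℝ (Set.range fun j : Fin l => fun i => V i j))
    (nstar : ℝ) (hnstar' : nstar = (n : ℝ) ∨ nstar = (n : ℝ) - (k : ℝ))
    (hnstar : (l : ℝ) < nstar)
    (G : Matrix (Fin (l + 1)) (Fin (l + 1)) ℝ)
    (hG00 : G 0 0 = nstar)
    (hG0j : ∀ j : Fin l, G 0 j.succ = nv j ∧ G j.succ 0 = nv j)
    (hGjj : ∀ j : Fin l, G j.succ j.succ = nv j ^ 2)
    (hGij : ∀ i j : Fin l, i ≠ j → G i.succ j.succ = 0)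
    (q : Fin (l + 1) → ℝ)
    (hq0 : q 0 = ∑ i, ε i ^ 2)
    (hqj : ∀ j : Fin l, q j.succ = (∑ i, ε i * V i j) ^ 2)
    (f0 : (Fin (l + 1) → ℝ) → ℝ)
    (hf0 : ∀ ν, f0 ν = ν ⬝ᵥ G.mulVec ν - 2 * (q ⬝ᵥ ν))
    (tr : (Fin (l + 1) → ℝ) → (Fin (l + 1) → ℝ))
    (htr0 : ∀ ν, tr ν 0 = 1 / ν 0)
    (htrj : ∀ ν, ∀ j : Fin l,
      tr ν j.succ = ν j.succ / (ν 0 * (ν 0 + nv j * ν j.succ)))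
    (Dset : Set (Fin (l + 1) → ℝ))
    (hDset : Dset = {d | (∀ j : Fin l, 0 ≤ d j.succ) ∧
      ∀ j : Fin l, d j.succ * nv j < d 0})
    (g : (Fin (l + 1) → ℝ) → ℝ)
    (hg : ∀ d, g d = -(nstar - (l : ℝ)) * Real.log (d 0)
      - ∑ j : Fin l, Real.log (d 0 - d j.succ * nv j)
      + d 0 * (∑ i, ε i ^ 2)
      - ∑ j : Fin l, d j.succ * (∑ i, ε i * V i j) ^ 2)
    (νhat : Fin (l + 1) → ℝ) (hνhat : ∀ j, 0 ≤ νhat j)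
    (hmin : ∀ ν : Fin (l + 1) → ℝ, (∀ j, 0 ≤ ν j) → f0 νhat ≤ f0 ν) :
    0 < νhat 0 ∧
    ∀ ν : Fin (l + 1) → ℝ, (∀ j, 0 ≤ ν j) → 0 < ν 0 →
      ((∀ ν' : Fin (l + 1) → ℝ, (∀ j, 0 ≤ ν' j) → f0 ν ≤ f0 ν') ↔
        (tr ν ∈ Dset ∧ ∀ d ∈ Dset, g (tr ν) ≤ g d)) := by
  have hnsl : (l:ℝ) ≤ nstar := le_of_lt hnstar
  have hns0 : (0:ℝ) ≤ nstar := le_trans (Nat.cast_nonneg l) hnsl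
  set sE : ℝ := ∑ i, ε i ^ 2 with hsE
  set Q1 : Fin l → ℝ := fun j => (∑ i, ε i * V i j) ^ 2 with hQ1
  have hQ1j : ∀ j, Q1 j = (∑ i, ε i * V i j) ^ 2 := fun j => rfl
  have hQnn : ∀ j, 0 ≤ Q1 j := fun j => by rw [hQ1j]; positivity
  -- positivity of the column norms
  have hcpos : ∀ j, 0 < nv j := by
    intro j
    obtain ⟨i0, hi0⟩ := Function.ne_iff.1 (hcols j)
    rw [hnv j]
    exact Finset.sum_pos' (fun i _ => sq_nonneg _)
      ⟨i0, Finset.mem_univ i0, pow_two_pos_of_ne_zero hi0⟩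
  -- orthogonality of columns
  have horth : ∀ j j' : Fin l, j ≠ j' → (∑ i, V i j * V i j') = 0 := by
    intro j j' hjj'
    have h := congrFun (congrFun hVV j) j'
    rw [Matrix.mul_apply, Matrix.diagonal_apply_ne _ hjj'] at h
    simpa [Matrix.transpose_apply] using h
  -- positivity of sE
  have hεne : ε ≠ 0 := fun h => hεspan (h ▸ Submodule.zero_mem _)
  have hspos : 0 < sE := by
    obtain ⟨i0, hi0⟩ := Function.ne_iff.1 hεne
    rw [hsE]
    exact Finset.sum_pos' (fun i _ => sq_nonneg _)
      ⟨i0, Finset.mem_univ i0, pow_two_pos_of_ne_zero hi0⟩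
  -- Bessel strict inequality
  have hbessel : ∑ j, Q1 j / nv j < sE := by
    have h := s19_bessel (ε := ε) (V := fun i j => V i j) (c := nv) hnv hcpos horth hεspan
    simpa [hQ1j] using h
  -- f0 in pair form
  have hf0F : ∀ w : Fin (l+1) → ℝ,
      f0 w = s19F nstar sE nv Q1 (w 0) (fun j => w j.succ) := by
    intro w
    rw [hf0]
    have hrow0 : G.mulVec w 0 = nstar * w 0 + ∑ j : Fin l, nv j * w j.succ := by
      simp only [Matrix.mulVec, dotProduct]
      rw [Fin.sum_univ_succ, hG00]
      congr 1
      exact Finset.sum_congr rfl (fun j _ => by rw [(hG0j j).1])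
    have hrows : ∀ i : Fin l, G.mulVec w i.succ = nv i * w 0 + nv i ^ 2 * w i.succ := by
      intro i
      simp only [Matrix.mulVec, dotProduct]
      rw [Fin.sum_univ_succ, (hG0j i).2]
      congr 1
      rw [Fintype.sum_eq_single i]
      · rw [hGjj i]
      · intro j hj
        rw [hGij i j (Ne.symm hj), zero_mul]
    have hdot : w ⬝ᵥ G.mulVec w
        = w 0 * (nstar * w 0 + ∑ j : Fin l, nv j * w j.succ)
          + ∑ i : Fin l, w i.succ * (nv i * w 0 + nv i ^ 2 * w i.succ) := by
      simp only [dotProduct]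
      rw [Fin.sum_univ_succ, hrow0]
      congr 1
      exact Finset.sum_congr rfl fun i _ => by rw [hrows i]
    have hqdot : q ⬝ᵥ w = sE * w 0 + ∑ j : Fin l, Q1 j * w j.succ := by
      simp only [dotProduct]
      rw [Fin.sum_univ_succ, hq0]
      congr 1
      exact Finset.sum_congr rfl fun j _ => by rw [hqj j, hQ1j]
    rw [hdot, hqdot]
    simp only [s19F]
    have expand : ∑ j : Fin l, (w 0 + nv j * w j.succ) ^ 2
        = ∑ j : Fin l, ((w 0) ^ 2 + ((nv j * w j.succ) * w 0
            + w j.succ * (nv j * w 0 + nv j ^ 2 * w j.succ))) :=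
      Finset.sum_congr rfl fun j _ => by ring
    rw [expand, Finset.sum_add_distrib, Finset.sum_add_distrib, Finset.sum_const,
        Finset.card_univ, Fintype.card_fin, nsmul_eq_mul, ← Finset.sum_mul]
    ring
  -- g in pair form
  have hgG : ∀ d : Fin (l+1) → ℝ,
      g d = s19G nstar sE nv Q1 (d 0) (fun j => d j.succ) := by
    intro d
    rw [hg]
    simp only [s19G, hQ1j]
  -- bridge: minimality of f0 gives pair minimality
  have pairmin : ∀ w : Fin (l+1) → ℝ,
      (∀ ν', (∀ j, 0 ≤ ν' j) → f0 w ≤ f0 ν') →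
      ∀ a' b', 0 ≤ a' → (∀ j, 0 ≤ b' j) →
        s19F nstar sE nv Q1 (w 0) (fun j => w j.succ) ≤ s19F nstar sE nv Q1 a' b' := by
    intro w hwmin a' b' ha' hb'
    set w' : Fin (l+1) → ℝ := Fin.cases a' b' with hw'
    have hcase : ∀ i : Fin (l+1), 0 ≤ w' i := by
      intro i
      rcases Fin.eq_zero_or_eq_succ i with h | ⟨j, rfl⟩
      · subst h; simpa [hw'] using ha'
      · simpa [hw'] using hb' j
    have h := hwmin w' hcase
    rw [hf0F w, hf0F w'] at h
    have e0 : w' 0 = a' := by rw [hw']; simp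
    have e1 : (fun j => w' j.succ) = b' := by funext j; rw [hw']; simp
    rw [e0, e1] at h
    exact h
  -- Part 1 : νhat 0 > 0
  have part1 : 0 < νhat 0 := by
    by_contra hcon
    push_neg at hcon
    have h0 : νhat 0 = 0 := le_antisymm hcon (hνhat 0)
    have nec := s19_nec hns0 hcpos (hνhat 0) (fun j : Fin l => hνhat j.succ)
      (pairmin νhat (hmin))
    have hA0 := nec.1.1
    rw [h0] at hA0
    have hjb : ∀ j, nv j * νhat j.succ ≤ Q1 j / nv j := by
      intro j
      rcases lt_or_eq_of_le (hνhat j.succ) with hbj | hbj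
      · have heq := (nec.2 j).2 hbj
        rw [h0] at heq
        rw [le_div_iff₀ (hcpos j)]
        linear_combination heq
      · rw [← hbj, mul_zero]
        exact div_nonneg (hQnn j) (le_of_lt (hcpos j))
    have hsum : ∑ j, nv j * νhat j.succ ≤ ∑ j, Q1 j / nv j :=
      Finset.sum_le_sum (fun j _ => hjb j)
    have : (0:ℝ) ≤ nstar * 0 + (∑ j, nv j * νhat j.succ) - sE := hA0
    have h1 : sE ≤ ∑ j, nv j * νhat j.succ := by linarith
    linarith [hbessel]
  refine ⟨part1, ?_⟩
  intro ν hν hν0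
  -- translation facts at a point w with w 0 > 0, w ≥ 0
  have transl : ∀ w : Fin (l+1) → ℝ, (∀ j, 0 ≤ w j) → 0 < w 0 →
      (0 < tr w 0) ∧ (∀ j : Fin l, 0 ≤ tr w j.succ) ∧
      (∀ j : Fin l, tr w 0 - tr w j.succ * nv j = 1 / (w 0 + nv j * w j.succ)) ∧
      (∀ j : Fin l, 0 < w 0 + nv j * w j.succ) := by
    intro w hw hw0
    have hden : ∀ j, 0 < w 0 + nv j * w j.succ := by
      intro j
      have := mul_nonneg (le_of_lt (hcpos j)) (hw j.succ)
      linarith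
    refine ⟨by rw [htr0]; positivity, ?_, ?_, hden⟩
    · intro j
      rw [htrj]
      exact div_nonneg (hw j.succ) (le_of_lt (mul_pos hw0 (hden j)))
    · intro j
      rw [htr0, htrj]
      have h1 : w 0 ≠ 0 := ne_of_gt hw0
      have h2 : w 0 + nv j * w j.succ ≠ 0 := ne_of_gt (hden j)
      rw [div_mul_eq_mul_div, div_sub_div _ _ h1 (mul_ne_zero h1 h2),
        div_eq_div_iff (mul_ne_zero h1 (mul_ne_zero h1 h2)) h2]
      ring
  -- membership of the image in Dset
  have trmem : ∀ w : Fin (l+1) → ℝ, (∀ j, 0 ≤ w j) → 0 < w 0 → tr w ∈ Dset := by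
    intro w hw hw0
    obtain ⟨ht0, htnn, hgap, hden⟩ := transl w hw hw0
    rw [hDset]
    refine ⟨htnn, fun j => ?_⟩
    have h1 : 0 < 1 / (w 0 + nv j * w j.succ) := one_div_pos.2 (hden j)
    have := hgap j
    linarith
  -- KKT at w implies tr w minimizes g over Dset
  have kkt_to_gmin : ∀ w : Fin (l+1) → ℝ, (∀ j, 0 ≤ w j) → 0 < w 0 →
      (nstar * (w 0) + (∑ j : Fin l, nv j * w j.succ) - sE = 0) →
      (∀ j : Fin l, 0 ≤ nv j * (w 0 + nv j * w j.succ) - Q1 j ∧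
        (0 < w j.succ → nv j * (w 0 + nv j * w j.succ) - Q1 j = 0)) →
      ∀ d ∈ Dset, g (tr w) ≤ g d := by
    intro w hw hw0 hst hcs d hd
    obtain ⟨ht0, htnn, hgap, hden⟩ := transl w hw hw0
    have hinv : ∀ j : Fin l, 1 / (tr w 0 - tr w j.succ * nv j) = w 0 + nv j * w j.succ := by
      intro j
      rw [hgap j, one_div_one_div]
    have htD : ∀ j : Fin l, tr w j.succ * nv j < tr w 0 := by
      intro j
      have h1 : 0 < 1 / (w 0 + nv j * w j.succ) := one_div_pos.2 (hden j)
      have := hgap j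
      linarith
    rw [hDset] at hd
    obtain ⟨hd1, hd2⟩ := hd
    have hd0 : 0 < d 0 := by
      have j0 : Fin l := ⟨0, hl⟩
      have := hd2 j0
      have h2 := mul_nonneg (hd1 j0) (le_of_lt (hcpos j0))
      linarith
    have h0' : (nstar - l)/(tr w 0) + (∑ j : Fin l, 1/(tr w 0 - tr w j.succ * nv j)) = sE := by
      have hw0' : w 0 ≠ 0 := ne_of_gt hw0
      have e0 : (nstar - (l:ℝ)) / (1 / w 0) = (nstar - (l:ℝ)) * w 0 := by
        field_simp
      have e1 : (∑ j : Fin l, 1/(tr w 0 - tr w j.succ * nv j)) = ∑ j : Fin l, (w 0 + nv j * w j.succ) :=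
        Finset.sum_congr rfl (fun j _ => hinv j)
      rw [e1, htr0, e0, Finset.sum_add_distrib, Finset.sum_const, Finset.card_univ,
        Fintype.card_fin, nsmul_eq_mul]
      linarith [hst]
    have hj' : ∀ j : Fin l, 0 ≤ nv j * (1/(tr w 0 - tr w j.succ * nv j)) - Q1 j ∧
        (0 < tr w j.succ → nv j * (1/(tr w 0 - tr w j.succ * nv j)) - Q1 j = 0) := by
      intro j
      rw [hinv j]
      refine ⟨(hcs j).1, fun hb => ?_⟩
      apply (hcs j).2
      by_contra hc
      push_neg at hc
      have hb0 : w j.succ = 0 := le_antisymm hc (hw j.succ)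
      rw [htrj, hb0, zero_div] at hb
      exact lt_irrefl 0 hb
    have hsuf := s19G_suf (l := l) (nstar := nstar) (s := sE) (c := nv) (q1 := Q1)
      hnsl ht0 htD h0' hj' htnn (d 0) (fun j => d j.succ) (fun j => hd1 j)
      (fun j => hd2 j) hd0
    rw [hgG (tr w), hgG d]
    exact hsuf
  constructor
  · -- forward direction
    intro hνmin
    refine ⟨trmem ν hν hν0, ?_⟩
    have nec := s19_nec hns0 hcpos (le_of_lt hν0) (fun j : Fin l => hν j.succ) (pairmin ν hνmin)
    exact kkt_to_gmin ν hν hν0 (nec.1.2 hν0) nec.2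
  · -- backward direction
    rintro ⟨hmem, hgmin⟩
    -- νhat satisfies KKT and its image minimizes g
    have nec := s19_nec hns0 hcpos (hνhat 0) (fun j : Fin l => hνhat j.succ) (pairmin νhat hmin)
    have hghatmin : ∀ d ∈ Dset, g (tr νhat) ≤ g d :=
      kkt_to_gmin νhat hνhat part1 (nec.1.2 part1) nec.2
    -- pair-form minimality for tr ν
    obtain ⟨ht0, htnn, hgap, hden⟩ := transl ν hν hν0
    obtain ⟨ht0', htnn', hgap', hden'⟩ := transl νhat hνhat part1
    have htD : ∀ j : Fin l, tr ν j.succ * nv j < tr ν 0 := by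
      intro j
      have h1 : 0 < 1 / (ν 0 + nv j * ν j.succ) := one_div_pos.2 (hden j)
      have := hgap j
      linarith
    have htD' : ∀ j : Fin l, tr νhat j.succ * nv j < tr νhat 0 := by
      intro j
      have h1 : 0 < 1 / (νhat 0 + nv j * νhat j.succ) := one_div_pos.2 (hden' j)
      have := hgap' j
      linarith
    have pairgmin : ∀ (x : ℝ) (y : Fin l → ℝ), 0 < x → (∀ j, 0 ≤ y j) →
        (∀ j : Fin l, y j * nv j < x) →
        s19G nstar sE nv Q1 (tr ν 0) (fun j => tr ν j.succ) ≤ s19G nstar sE nv Q1 x y := by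
      intro xx yy hx hy hyD
      set dd : Fin (l+1) → ℝ := Fin.cases xx yy with hdd
      have hmemd : dd ∈ Dset := by
        rw [hDset]
        constructor
        · intro j; simpa [hdd] using hy j
        · intro j; simpa [hdd] using hyD j
      have h := hgmin dd hmemd
      rw [hgG (tr ν), hgG dd] at h
      have e0 : dd 0 = xx := by rw [hdd]; simp
      have e1 : (fun j => dd j.succ) = yy := by funext j; rw [hdd]; simp
      rw [e0, e1] at h
      exact h
    have hGe : s19G nstar sE nv Q1 (tr ν 0) (fun j => tr ν j.succ)
        = s19G nstar sE nv Q1 (tr νhat 0) (fun j => tr νhat j.succ) := by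
      have h1 := pairgmin (tr νhat 0) (fun j => tr νhat j.succ) ht0' htnn' htD'
      have h2 := hghatmin (tr ν) hmem
      rw [hgG (tr νhat), hgG (tr ν)] at h2
      exact le_antisymm h1 h2
    have huniq := s19G_uniq (l := l) (nstar := nstar) (s := sE) (c := nv) (q1 := Q1)
      hnstar hcpos ht0 ht0' htnn htD htnn' htD' pairgmin hGe
    -- recover ν = νhat
    have hν0' : ν 0 ≠ 0 := ne_of_gt hν0
    have hνh0' : νhat 0 ≠ 0 := ne_of_gt part1
    have ha : ν 0 = νhat 0 := by
      have h := huniq.1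
      rw [htr0, htr0] at h
      field_simp at h
      linarith
    have hb : ∀ j : Fin l, ν j.succ = νhat j.succ := by
      intro j
      have h := congrFun huniq.2 j
      rw [htrj, htrj] at h
      have hd1 : ν 0 * (ν 0 + nv j * ν j.succ) ≠ 0 :=
        ne_of_gt (mul_pos hν0 (hden j))
      have hd2 : νhat 0 * (νhat 0 + nv j * νhat j.succ) ≠ 0 :=
        ne_of_gt (mul_pos part1 (hden' j))
      rw [div_eq_div_iff hd1 hd2] at h
      rw [ha] at h
      have key : νhat 0 ^ 2 * ν j.succ = νhat 0 ^ 2 * νhat j.succ := by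
        linear_combination h
      exact mul_left_cancel₀ (pow_ne_zero 2 hνh0') key
    have hνeq : ν = νhat := by
      funext i
      rcases Fin.eq_zero_or_eq_succ i with h | ⟨j, rfl⟩
      · rw [h]; exact ha
      · exact hb j
    intro ν' hν'
    rw [hνeq]
    exact hmin ν' hν'
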